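/- If I and J are interpretations of a program P such that I(p) ≤ J(p) for every atom p, then I ⊑_∞ J. -/

import Mathlib

open Ordinal Set

noncomputable section
attribute [local instance] Classical.propDecidable

namespace IVS

/-- Countable ordinals: ordinals below `ω₁`. -/
abbrev Ord1 := {o : Ordinal.{0} // o < ω₁}

theorem zero_lt_omega1 : (0 : Ordinal) < ω₁ := omega_pos 1

theorem succ_lt_omega1 {o : Ordinal} (h : o < ω₁) : o + 1 < ω₁ := by
  have h' := (Cardinal.isSuccLimit_omega 1).succ_lt h
  rwa [Order.succ_eq_add_one] at h'

/-- zero as a countable ordinal -/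
def O0 : Ord1 := ⟨0, zero_lt_omega1⟩

/-- successor on countable ordinals -/
def Ord1.succ (a : Ord1) : Ord1 := ⟨a.1 + 1, succ_lt_omega1 a.2⟩

/-- The truth domain `V`: `F_α < ⋯ < 0 < ⋯ < T_α` realized as a lexicographic sum. -/
abbrev TV := Ord1 ⊕ₗ (Unit ⊕ₗ Ord1ᵒᵈ)

/-- the false value `F_α` -/
def TV.F (a : Ord1) : TV := toLex (Sum.inl a)
/-- the middle value `0` -/
def TV.Z : TV := toLex (Sum.inr (toLex (Sum.inl ())))
/-- the true value `T_α` -/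
def TV.T (a : Ord1) : TV := toLex (Sum.inr (toLex (Sum.inr (OrderDual.toDual a))))

/-- the order of a truth value (`⊤` codes `+∞`, the order of `0`) -/
def ordOf (v : TV) : WithTop Ordinal :=
  match ofLex v with
  | .inl a => (a.1 : Ordinal)
  | .inr b =>
    match ofLex b with
    | .inl _ => ⊤
    | .inr a => ((OrderDual.ofDual a).1 : Ordinal)

/-- negation-as-failure: `¬F_α = T_{α+1}`, `¬T_α = F_{α+1}`, `¬0 = 0`. -/
def negv (v : TV) : TV :=
  match ofLex v with
  | .inl a => TV.T a.succ
  | .inr b =>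
    match ofLex b with
    | .inl _ => TV.Z
    | .inr a => TV.F (OrderDual.ofDual a).succ

/-- Literals of a propositional normal program (atoms are natural numbers). -/
inductive Lit where
  | pos (n : ℕ)
  | neg (n : ℕ)
  | tt
  | ff

/-- A normal program clause: a head atom and a body which is a conjunction of literals. -/
structure Clause where
  head : ℕ
  body : List Lit

/-- A (possibly infinite) propositional normal logic program. -/
abbrev Program := Set Clause

/-- Infinite-valued interpretations. -/
abbrev Interp := ℕ → TV

/-- the interpretation assigning `F₀` to every atom (denoted `∅` in the paper) -/
def botI : Interp := fun _ => TV.F O0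

def evalLit (I : Interp) : Lit → TV
  | .pos n => I n
  | .neg n => negv (I n)
  | .tt => TV.T O0
  | .ff => TV.F O0

/-- value of a body (conjunction evaluated by `min`; empty conjunction is `T₀`) -/
def evalBody (I : Interp) (b : List Lit) : TV :=
  (b.map (evalLit I)).foldr min (TV.T O0)

/-- least upper bound in `V` (well-defined by the lub-existence theorem) -/
def lub (S : Set TV) : TV := if h : ∃ v, IsLUB S v then h.choose else TV.Z

/-- the immediate consequence operator -/
def TP (P : Program) (I : Interp) : Interp :=
  fun p => lub {v | ∃ c ∈ P, c.head = p ∧ evalBody I c.body = v}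

/-- `I` is an (infinite-valued) model of `P` -/
def isModel (P : Program) (I : Interp) : Prop :=
  ∀ c ∈ P, evalBody I c.body ≤ I c.head

/-- the level set `I ∥ v` -/
def level (I : Interp) (v : TV) : Set ℕ := {p | I p = v}

/-- `I =_α J` -/
def eqA (α : Ord1) (I J : Interp) : Prop :=
  ∀ β ≤ α, level I (TV.T β) = level J (TV.T β) ∧ level I (TV.F β) = level J (TV.F β)

/-- `I ⊏_α J` -/
def sqltA (α : Ord1) (I J : Interp) : Prop :=
  (∀ β < α, eqA β I J) ∧
    ((level I (TV.T α) ⊂ level J (TV.T α) ∧ level J (TV.F α) ⊆ level I (TV.F α)) ∨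
     (level I (TV.T α) ⊆ level J (TV.T α) ∧ level J (TV.F α) ⊂ level I (TV.F α)))

/-- `I ⊑_α J` -/
def sqleA (α : Ord1) (I J : Interp) : Prop := eqA α I J ∨ sqltA α I J

/-- `I ⊏_∞ J` -/
def sqltInf (I J : Interp) : Prop := ∃ α : Ord1, sqltA α I J

/-- `I ⊑_∞ J` -/
def sqleInf (I J : Interp) : Prop := I = J ∨ sqltInf I J

/-- the sequence `T_P^n(I)` is an `α`-chain -/
def isChainA (P : Program) (α : Ord1) (I : Interp) : Prop :=
  ∀ n : ℕ, sqleA α ((TP P)^[n] I) ((TP P)^[n + 1] I)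

/-- the interpretation `T_{P,α}^ω(I)` -/
def TPomega (P : Program) (α : Ord1) (I : Interp) : Interp := fun p =>
  if ordOf (I p) < (α.1 : WithTop Ordinal) then I p
  else if ∃ n : ℕ, (TP P)^[n] I p = TV.T α then TV.T α
  else if ∀ n : ℕ, (TP P)^[n] I p = TV.F α then TV.F α
  else TV.F α.succ

/-- `⊔_{β<α} M_β` for a family defined below `α` -/
def sqcupI (α : Ord1) (f : ∀ β : Ordinal, β < α.1 → Interp) : Interp := fun p =>
  if h : ∃ β : Ordinal, ∃ hb : β < α.1, ordOf (f β hb p) = (β : WithTop Ordinal)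
  then f h.choose h.choose_spec.choose p
  else TV.F α

/-- the approximations `M_α` to the minimum model (junk values for `α ≥ ω₁`) -/
def MA (P : Program) (o : Ordinal) : Interp :=
  Ordinal.limitRecOn o
    (TPomega P O0 botI)
    (fun o' ih => if h : o' + 1 < ω₁ then TPomega P ⟨o' + 1, h⟩ ih else ih)
    (fun o' _ ih =>
      if h : o' < ω₁ then TPomega P ⟨o', h⟩ (sqcupI ⟨o', h⟩ ih) else botI)

/-- `M_α` for a countable ordinal `α` -/
def Mα (P : Program) (α : Ord1) : Interp := MA P α.1

/-- the defining property of the depth `δ` of a program -/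
def isDepth (P : Program) (δ : Ord1) : Prop :=
  (level (Mα P δ) (TV.T δ) = ∅ ∧ level (Mα P δ) (TV.F δ) = ∅) ∧
    ∀ β : Ord1, β < δ →
      (level (Mα P β) (TV.T β) ≠ ∅ ∨ level (Mα P β) (TV.F β) ≠ ∅)

/-- the depth of a program -/
def depth (P : Program) : Ord1 :=
  if h : ∃ δ : Ord1, isDepth P δ then h.choose else O0

/-- the minimum model `M_P` -/
def MP (P : Program) : Interp := fun p =>
  if ordOf (Mα P (depth P) p) < ((depth P).1 : WithTop Ordinal)
  then Mα P (depth P) p else TV.Z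

/-- the set of all infinite-valued models of `P` -/
def models (P : Program) : Set Interp := {I | isModel P I}

/-- `M ♯ α`: the part of `M` consisting of values of order `α` -/
def sharp (I : Interp) (α : Ord1) : Set (ℕ × TV) :=
  {pv | I pv.1 = pv.2 ∧ ordOf pv.2 = (α.1 : WithTop Ordinal)}

/-- `⨀^α S = ⋀^α S ∪ ⋁^α S` -/
def odot (α : Ord1) (S : Set Interp) : Set (ℕ × TV) :=
  {pv | (∃ p : ℕ, pv = (p, TV.T α) ∧ ∀ M ∈ S, M p = TV.T α) ∨
        (∃ p : ℕ, pv = (p, TV.F α) ∧ ∃ M ∈ S, M p = TV.F α)}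

/-- the sets `S_α` of the model intersection construction (junk for `α ≥ ω₁`) -/
def SA (P : Program) (o : Ordinal) : Set Interp :=
  Ordinal.limitRecOn o
    {M ∈ models P | sharp M O0 = odot O0 (models P)}
    (fun o' ih =>
      if h : o' + 1 < ω₁ then {M ∈ ih | sharp M ⟨o' + 1, h⟩ = odot ⟨o' + 1, h⟩ ih} else ih)
    (fun o' _ ih =>
      if h : o' < ω₁ then
        {M : Interp | M ∈ (⋂ (b : Ordinal) (hb : b < o'), ih b hb) ∧
          sharp M ⟨o', h⟩ = odot ⟨o', h⟩ (⋂ (b : Ordinal) (hb : b < o'), ih b hb)}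
      else ∅)


lemma TV.T_inj' {a b : Ord1} (h : TV.T a = TV.T b) : a = b := by
  simpa [TV.T] using h
lemma TV.F_inj' {a b : Ord1} (h : TV.F a = TV.F b) : a = b := by
  simpa [TV.F] using h
lemma TV.F_ne_T' (a b : Ord1) : TV.F a ≠ TV.T b := by simp [TV.F, TV.T]
lemma TV.Z_ne_T' (b : Ord1) : TV.Z ≠ TV.T b := by simp [TV.Z, TV.T]

lemma le_F' {a : Ord1} {v : TV} (h : v ≤ TV.F a) : ∃ b ≤ a, v = TV.F b := by
  rcases v with v
  rcases v with b | b
  · rcases Sum.Lex.toLex_le_toLex.mp h with h' | h'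
    exact ⟨b, h', rfl⟩
  · exact absurd (Sum.Lex.toLex_le_toLex.mp h) (by rintro (_|_))

lemma T_le' {a : Ord1} {v : TV} (h : TV.T a ≤ v) : ∃ b ≤ a, v = TV.T b := by
  rcases v with v
  rcases v with b | b
  · exact absurd (Sum.Lex.toLex_le_toLex.mp h) (by rintro (_|_))
  · rcases Sum.Lex.toLex_le_toLex.mp h with _ | h'
    rcases b with b
    rcases b with u | c
    · exact absurd (Sum.Lex.toLex_le_toLex.mp h') (by rintro (_|_))
    · rcases Sum.Lex.toLex_le_toLex.mp h' with _ | h''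
      exact ⟨OrderDual.ofDual c, h'', rfl⟩

lemma Z_le' {v : TV} (h : TV.Z ≤ v) : v = TV.Z ∨ ∃ b, v = TV.T b := by
  rcases v with v
  rcases v with b | b
  · exact absurd (Sum.Lex.toLex_le_toLex.mp h) (by rintro (_|_))
  · rcases b with b
    rcases b with u | c
    · exact Or.inl rfl
    · exact Or.inr ⟨OrderDual.ofDual c, rfl⟩

/-- every truth value is `F`, `Z`, or `T` -/
lemma TV.cases' (v : TV) : (∃ b, v = TV.F b) ∨ v = TV.Z ∨ ∃ b, v = TV.T b := by
  rcases v with v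
  rcases v with b | b
  · exact Or.inl ⟨b, rfl⟩
  · rcases b with b
    rcases b with u | c
    · exact Or.inr (Or.inl rfl)
    · exact Or.inr (Or.inr ⟨OrderDual.ofDual c, rfl⟩)

/-- the "difference at order `o`" predicate -/
def diffAt (I J : Interp) (o : Ordinal) : Prop :=
  ∃ ho : o < ω₁,
    level I (TV.T ⟨o, ho⟩) ≠ level J (TV.T ⟨o, ho⟩) ∨
    level I (TV.F ⟨o, ho⟩) ≠ level J (TV.F ⟨o, ho⟩)

lemma diffAt_exists {I J : Interp} (h : ∀ p, I p ≤ J p) (hne : I ≠ J) :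
    ∃ o, diffAt I J o := by
  have : ∃ p, I p ≠ J p := by
    by_contra hc
    push_neg at hc
    exact hne (funext hc)
  obtain ⟨p, hp⟩ := this
  rcases TV.cases' (I p) with ⟨b, hb⟩ | hb | ⟨b, hb⟩
  · -- I p = F b, J p ≠ F b
    refine ⟨b.1, b.2, Or.inr ?_⟩
    intro hlev
    have : p ∈ level I (TV.F ⟨b.1, b.2⟩) := by simpa [level] using hb
    rw [hlev] at this
    exact hp (by rw [hb, this])
  · -- I p = Z, so J p = T c for some c
    have hZ : TV.Z ≤ J p := hb ▸ h p
    rcases Z_le' hZ with hJ | ⟨c, hJ⟩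
    · exact absurd (hb.trans hJ.symm) hp
    · refine ⟨c.1, c.2, Or.inl ?_⟩
      intro hlev
      have : p ∈ level J (TV.T ⟨c.1, c.2⟩) := by simpa [level] using hJ
      rw [← hlev] at this
      exact TV.Z_ne_T' _ (hb.symm.trans this)
  · -- I p = T b, so J p = T c, c ≤ b, c ≠ b
    obtain ⟨c, hcb, hJ⟩ := T_le' (hb ▸ h p)
    have hcb' : c ≠ b := fun hcb' => hp (by rw [hb, hJ, hcb'])
    refine ⟨c.1, c.2, Or.inl ?_⟩
    intro hlev
    have : p ∈ level J (TV.T ⟨c.1, c.2⟩) := by simpa [level] using hJ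
    rw [← hlev] at this
    have : TV.T b = TV.T ⟨c.1, c.2⟩ := hb.symm.trans this
    exact hcb' (TV.T_inj' this).symm

/-- Pointwise dominated interpretations are `⊑_∞`-below. -/
theorem sqleInf_of_pointwise_le (I J : Interp) (h : ∀ p : ℕ, I p ≤ J p) :
    sqleInf I J := by
  rcases Classical.em (I = J) with heq | heq
  · exact Or.inl heq
  right
  obtain ⟨o, ho⟩ := diffAt_exists h heq
  -- take the least such ordinal
  set S : Set Ordinal := {o | diffAt I J o} with hS
  have hne : S.Nonempty := ⟨o, ho⟩
  set o0 := Ordinal.lt_wf.min S hne with ho0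
  obtain ⟨ho1, hdiff⟩ : diffAt I J o0 := Ordinal.lt_wf.min_mem S hne
  have hmin : ∀ o' < o0, ¬ diffAt I J o' := fun o' hlt hd =>
    Ordinal.lt_wf.not_lt_min S hd hlt
  set α : Ord1 := ⟨o0, ho1⟩ with hα
  -- below α, all level sets agree
  have heqlev : ∀ β : Ord1, β < α →
      level I (TV.T β) = level J (TV.T β) ∧ level I (TV.F β) = level J (TV.F β) := by
    intro β hβ
    have hβα : β.1 < o0 := hβ
    by_contra hc
    push_neg at hc
    rcases Classical.em (level I (TV.T β) = level J (TV.T β)) with hT | hT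
    · exact hmin β.1 hβα ⟨β.2, Or.inr (hc hT)⟩
    · exact hmin β.1 hβα ⟨β.2, Or.inl (by simpa using hT)⟩
  refine ⟨α, ?_, ?_⟩
  · -- ∀ β < α, eqA β I J
    intro β hβ γ hγβ
    exact heqlev γ (lt_of_le_of_lt hγβ hβ)
  · -- the inclusions at level α
    have hTsub : level I (TV.T α) ⊆ level J (TV.T α) := by
      intro p hp
      have hIp : I p = TV.T α := hp
      obtain ⟨b, hba, hJ⟩ := T_le' (hIp ▸ h p)
      rcases lt_or_eq_of_le hba with hlt | rfl
      · exfalso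
        have hmem : p ∈ level J (TV.T b) := hJ
        rw [← (heqlev b hlt).1] at hmem
        have : TV.T α = TV.T b := hIp.symm.trans hmem
        exact absurd (TV.T_inj' this) (ne_of_gt hlt)
      · exact hJ
    have hFsub : level J (TV.F α) ⊆ level I (TV.F α) := by
      intro p hp
      have hJp : J p = TV.F α := hp
      obtain ⟨b, hba, hI⟩ := le_F' (hJp ▸ h p)
      rcases lt_or_eq_of_le hba with hlt | rfl
      · exfalso
        have hmem : p ∈ level I (TV.F b) := hI
        rw [(heqlev b hlt).2] at hmem
        have : TV.F α = TV.F b := hJp.symm.trans hmem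
        exact absurd (TV.F_inj' this) (ne_of_gt hlt)
      · exact hI
    rcases hdiff with hT | hF
    · exact Or.inl ⟨ssubset_iff_subset_ne.mpr ⟨hTsub, hT⟩, hFsub⟩
    · exact Or.inr ⟨hTsub, ssubset_iff_subset_ne.mpr ⟨hFsub, Ne.symm hF⟩⟩


end IVS
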